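/- The map k ↦ E(k)·K(k) is strictly increasing on (0,1). -/

import Mathlib

open Real Set intervalIntegral

noncomputable def K (k : ℝ) : ℝ :=
  ∫ θ in (0:ℝ)..(Real.pi/2), 1 / Real.sqrt (1 - k^2 * Real.sin θ ^ 2)

noncomputable def E (k : ℝ) : ℝ :=
  ∫ θ in (0:ℝ)..(Real.pi/2), Real.sqrt (1 - k^2 * Real.sin θ ^ 2)


lemma f_pos {k : ℝ} (hk0 : 0 ≤ k) (hk1 : k < 1) (θ : ℝ) :
    0 < 1 - k^2 * Real.sin θ ^ 2 := by
  nlinarith [Real.sin_sq_le_one θ, sq_nonneg (Real.sin θ), sq_nonneg k]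

lemma comb {x y : ℝ} (hx : 0 < x) (hy : 0 < y) :
    Real.sqrt x / Real.sqrt y + Real.sqrt y / Real.sqrt x = (x + y) / Real.sqrt (x * y) := by
  have hs : Real.sqrt x ^ 2 = x := Real.sq_sqrt hx.le
  have ht : Real.sqrt y ^ 2 = y := Real.sq_sqrt hy.le
  have sx := Real.sqrt_pos.2 hx
  have sy := Real.sqrt_pos.2 hy
  rw [Real.sqrt_mul hx.le]
  field_simp
  nlinarith [hs, ht, sx, sy]

lemma core_le {x1 y1 x2 y2 : ℝ} (hx1 : 0 < x1) (hy1 : 0 < y1) (hx2 : 0 < x2) (hy2 : 0 < y2)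
    (h : (x1 + y1)^2 * (x2 * y2) ≤ (x2 + y2)^2 * (x1 * y1)) :
    Real.sqrt x1 / Real.sqrt y1 + Real.sqrt y1 / Real.sqrt x1 ≤
      Real.sqrt x2 / Real.sqrt y2 + Real.sqrt y2 / Real.sqrt x2 := by
  rw [comb hx1 hy1, comb hx2 hy2]
  have p1 : 0 < x1 * y1 := mul_pos hx1 hy1
  have p2 : 0 < x2 * y2 := mul_pos hx2 hy2
  have s1 := Real.sqrt_pos.2 p1
  have s2 := Real.sqrt_pos.2 p2
  rw [div_le_div_iff₀ s1 s2]
  have key : ((x1 + y1) * Real.sqrt (x2 * y2))^2 ≤ ((x2 + y2) * Real.sqrt (x1 * y1))^2 := by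
    rw [mul_pow, mul_pow, Real.sq_sqrt p1.le, Real.sq_sqrt p2.le]
    exact h
  have h1 : 0 ≤ (x1 + y1) * Real.sqrt (x2 * y2) := by positivity
  have h2 : 0 ≤ (x2 + y2) * Real.sqrt (x1 * y1) := by positivity
  nlinarith [key, h1, h2]

lemma core_lt {x1 y1 x2 y2 : ℝ} (hx1 : 0 < x1) (hy1 : 0 < y1) (hx2 : 0 < x2) (hy2 : 0 < y2)
    (h : (x1 + y1)^2 * (x2 * y2) < (x2 + y2)^2 * (x1 * y1)) :
    Real.sqrt x1 / Real.sqrt y1 + Real.sqrt y1 / Real.sqrt x1 <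
      Real.sqrt x2 / Real.sqrt y2 + Real.sqrt y2 / Real.sqrt x2 := by
  rw [comb hx1 hy1, comb hx2 hy2]
  have p1 : 0 < x1 * y1 := mul_pos hx1 hy1
  have p2 : 0 < x2 * y2 := mul_pos hx2 hy2
  have s1 := Real.sqrt_pos.2 p1
  have s2 := Real.sqrt_pos.2 p2
  rw [div_lt_div_iff₀ s1 s2]
  have key : ((x1 + y1) * Real.sqrt (x2 * y2))^2 < ((x2 + y2) * Real.sqrt (x1 * y1))^2 := by
    rw [mul_pow, mul_pow, Real.sq_sqrt p1.le, Real.sq_sqrt p2.le]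
    exact h
  have h1 : 0 ≤ (x1 + y1) * Real.sqrt (x2 * y2) := by positivity
  have h2 : 0 ≤ (x2 + y2) * Real.sqrt (x1 * y1) := by positivity
  nlinarith [key, h1, h2]

lemma poly_le {u1 u2 a b : ℝ} (h1 : 0 < u1) (h12 : u1 < u2) (h2 : u2 < 1)
    (ha : 0 ≤ a) (ha1 : a ≤ 1) (hb : 0 ≤ b) (hb1 : b ≤ 1) :
    ((1 - u1*a) + (1 - u1*b))^2 * ((1 - u2*a) * (1 - u2*b)) ≤
      ((1 - u2*a) + (1 - u2*b))^2 * ((1 - u1*a) * (1 - u1*b)) := by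
  have hu2 : 0 < u2 := h1.trans h12
  have key : ((1 - u2*a) + (1 - u2*b))^2 * ((1 - u1*a) * (1 - u1*b)) -
      ((1 - u1*a) + (1 - u1*b))^2 * ((1 - u2*a) * (1 - u2*b)) =
      (u2 - u1) * (a - b)^2 * ((u1 + u2) - u1*u2*(a+b)) := by ring
  have br : 0 < (u1 + u2) - u1*u2*(a+b) := by nlinarith [mul_pos h1 hu2]
  nlinarith [sq_nonneg (a - b), mul_nonneg (mul_nonneg (le_of_lt (sub_pos.2 h12)) (sq_nonneg (a-b))) br.le]

lemma poly_lt {u1 u2 a b : ℝ} (h1 : 0 < u1) (h12 : u1 < u2) (h2 : u2 < 1)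
    (ha : 0 ≤ a) (ha1 : a ≤ 1) (hb : 0 ≤ b) (hb1 : b ≤ 1) (hab : a ≠ b) :
    ((1 - u1*a) + (1 - u1*b))^2 * ((1 - u2*a) * (1 - u2*b)) <
      ((1 - u2*a) + (1 - u2*b))^2 * ((1 - u1*a) * (1 - u1*b)) := by
  have hu2 : 0 < u2 := h1.trans h12
  have key : ((1 - u2*a) + (1 - u2*b))^2 * ((1 - u1*a) * (1 - u1*b)) -
      ((1 - u1*a) + (1 - u1*b))^2 * ((1 - u2*a) * (1 - u2*b)) =
      (u2 - u1) * (a - b)^2 * ((u1 + u2) - u1*u2*(a+b)) := by ring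
  have br : 0 < (u1 + u2) - u1*u2*(a+b) := by nlinarith [mul_pos h1 hu2]
  have hab2 : 0 < (a - b)^2 := (sq_nonneg _).lt_of_ne (Ne.symm (pow_ne_zero 2 (sub_ne_zero.2 hab)))
  nlinarith [mul_pos (mul_pos (sub_pos.2 h12) hab2) br]

lemma cont_sqrt (k : ℝ) : Continuous fun θ : ℝ => Real.sqrt (1 - k^2 * Real.sin θ ^ 2) :=
  (continuous_const.sub (continuous_const.mul (Real.continuous_sin.pow 2))).sqrt

lemma sqrt_f_pos {k : ℝ} (hk0 : 0 ≤ k) (hk1 : k < 1) (θ : ℝ) :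
    0 < Real.sqrt (1 - k^2 * Real.sin θ ^ 2) :=
  Real.sqrt_pos.2 (f_pos hk0 hk1 θ)

lemma cont_inv {k : ℝ} (hk0 : 0 ≤ k) (hk1 : k < 1) :
    Continuous fun θ : ℝ => 1 / Real.sqrt (1 - k^2 * Real.sin θ ^ 2) :=
  continuous_const.div (cont_sqrt k) (fun θ => (sqrt_f_pos hk0 hk1 θ).ne')

lemma inner_eq {k : ℝ} (hk0 : 0 ≤ k) (hk1 : k < 1) (θ : ℝ) :
    ∫ φ in (0:ℝ)..(Real.pi/2),
      (Real.sqrt (1 - k^2 * Real.sin θ ^ 2) / Real.sqrt (1 - k^2 * Real.sin φ ^ 2)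
        + Real.sqrt (1 - k^2 * Real.sin φ ^ 2) / Real.sqrt (1 - k^2 * Real.sin θ ^ 2))
    = Real.sqrt (1 - k^2 * Real.sin θ ^ 2) * K k
        + E k / Real.sqrt (1 - k^2 * Real.sin θ ^ 2) := by
  have h1 : IntervalIntegrable
      (fun φ => Real.sqrt (1 - k^2 * Real.sin θ ^ 2) / Real.sqrt (1 - k^2 * Real.sin φ ^ 2))
      MeasureTheory.volume 0 (Real.pi/2) :=
    (continuous_const.div (cont_sqrt k) (fun φ => (sqrt_f_pos hk0 hk1 φ).ne')).intervalIntegrable _ _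
  have h2 : IntervalIntegrable
      (fun φ => Real.sqrt (1 - k^2 * Real.sin φ ^ 2) / Real.sqrt (1 - k^2 * Real.sin θ ^ 2))
      MeasureTheory.volume 0 (Real.pi/2) :=
    ((cont_sqrt k).div_const _).intervalIntegrable _ _
  rw [intervalIntegral.integral_add h1 h2]
  congr 1
  · have : (fun φ => Real.sqrt (1 - k^2 * Real.sin θ ^ 2) / Real.sqrt (1 - k^2 * Real.sin φ ^ 2))
        = fun φ => Real.sqrt (1 - k^2 * Real.sin θ ^ 2) * (1 / Real.sqrt (1 - k^2 * Real.sin φ ^ 2)) := by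
      funext φ; rw [mul_one_div]
    rw [this, intervalIntegral.integral_const_mul]
    rfl
  · rw [intervalIntegral.integral_div]
    rfl

lemma P_integral {k : ℝ} (hk0 : 0 ≤ k) (hk1 : k < 1) :
    (∫ θ in (0:ℝ)..(Real.pi/2),
      (Real.sqrt (1 - k^2 * Real.sin θ ^ 2) * K k + E k / Real.sqrt (1 - k^2 * Real.sin θ ^ 2)))
    = 2 * (E k * K k) := by
  have h1 : IntervalIntegrable (fun θ => Real.sqrt (1 - k^2 * Real.sin θ ^ 2) * K k)
      MeasureTheory.volume 0 (Real.pi/2) := ((cont_sqrt k).mul continuous_const).intervalIntegrable _ _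
  have h2 : IntervalIntegrable (fun θ => E k / Real.sqrt (1 - k^2 * Real.sin θ ^ 2))
      MeasureTheory.volume 0 (Real.pi/2) :=
    (continuous_const.div (cont_sqrt k) (fun θ => (sqrt_f_pos hk0 hk1 θ).ne')).intervalIntegrable _ _
  rw [intervalIntegral.integral_add h1 h2, intervalIntegral.integral_mul_const]
  have : (fun θ => E k / Real.sqrt (1 - k^2 * Real.sin θ ^ 2))
      = fun θ => E k * (1 / Real.sqrt (1 - k^2 * Real.sin θ ^ 2)) := by
    funext θ; rw [mul_one_div]
  rw [this, intervalIntegral.integral_const_mul]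
  show E k * K k + E k * K k = 2 * (E k * K k)
  ring

lemma ptwise_le {k1 k2 : ℝ} (h0 : 0 < k1) (h12 : k1 < k2) (h2 : k2 < 1) (θ φ : ℝ) :
    Real.sqrt (1 - k1^2 * Real.sin θ ^ 2) / Real.sqrt (1 - k1^2 * Real.sin φ ^ 2)
      + Real.sqrt (1 - k1^2 * Real.sin φ ^ 2) / Real.sqrt (1 - k1^2 * Real.sin θ ^ 2)
    ≤ Real.sqrt (1 - k2^2 * Real.sin θ ^ 2) / Real.sqrt (1 - k2^2 * Real.sin φ ^ 2)
      + Real.sqrt (1 - k2^2 * Real.sin φ ^ 2) / Real.sqrt (1 - k2^2 * Real.sin θ ^ 2) := by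
  have hu1 : 0 < k1^2 := by positivity
  have hu12 : k1^2 < k2^2 := by nlinarith
  have hu2 : k2^2 < 1 := by nlinarith
  exact core_le (f_pos (by positivity) (by nlinarith) θ) (f_pos (by positivity) (by nlinarith) φ)
    (f_pos (by nlinarith) h2 θ) (f_pos (by nlinarith) h2 φ)
    (poly_le hu1 hu12 hu2 (sq_nonneg _) (Real.sin_sq_le_one θ) (sq_nonneg _) (Real.sin_sq_le_one φ))

lemma ptwise_lt {k1 k2 : ℝ} (h0 : 0 < k1) (h12 : k1 < k2) (h2 : k2 < 1) {θ φ : ℝ}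
    (hab : Real.sin θ ^ 2 ≠ Real.sin φ ^ 2) :
    Real.sqrt (1 - k1^2 * Real.sin θ ^ 2) / Real.sqrt (1 - k1^2 * Real.sin φ ^ 2)
      + Real.sqrt (1 - k1^2 * Real.sin φ ^ 2) / Real.sqrt (1 - k1^2 * Real.sin θ ^ 2)
    < Real.sqrt (1 - k2^2 * Real.sin θ ^ 2) / Real.sqrt (1 - k2^2 * Real.sin φ ^ 2)
      + Real.sqrt (1 - k2^2 * Real.sin φ ^ 2) / Real.sqrt (1 - k2^2 * Real.sin θ ^ 2) := by
  have hu1 : 0 < k1^2 := by positivity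
  have hu12 : k1^2 < k2^2 := by nlinarith
  have hu2 : k2^2 < 1 := by nlinarith
  exact core_lt (f_pos (by positivity) (by nlinarith) θ) (f_pos (by positivity) (by nlinarith) φ)
    (f_pos (by nlinarith) h2 θ) (f_pos (by nlinarith) h2 φ)
    (poly_lt hu1 hu12 hu2 (sq_nonneg _) (Real.sin_sq_le_one θ) (sq_nonneg _) (Real.sin_sq_le_one φ) hab)

lemma P_lt {k1 k2 : ℝ} (h0 : 0 < k1) (h12 : k1 < k2) (h2 : k2 < 1) {θ : ℝ}
    (hθ : θ ∈ Ioo 0 (Real.pi/2)) :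
    Real.sqrt (1 - k1^2 * Real.sin θ ^ 2) * K k1 + E k1 / Real.sqrt (1 - k1^2 * Real.sin θ ^ 2)
    < Real.sqrt (1 - k2^2 * Real.sin θ ^ 2) * K k2 + E k2 / Real.sqrt (1 - k2^2 * Real.sin θ ^ 2) := by
  have hk10 : (0:ℝ) ≤ k1 := h0.le
  have hk11 : k1 < 1 := h12.trans h2
  have hk20 : (0:ℝ) ≤ k2 := (h0.trans h12).le
  rw [← inner_eq hk10 hk11 θ, ← inner_eq hk20 h2 θ]
  set G1 : ℝ → ℝ := fun φ =>
    Real.sqrt (1 - k1^2 * Real.sin θ ^ 2) / Real.sqrt (1 - k1^2 * Real.sin φ ^ 2)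
      + Real.sqrt (1 - k1^2 * Real.sin φ ^ 2) / Real.sqrt (1 - k1^2 * Real.sin θ ^ 2) with hG1
  set G2 : ℝ → ℝ := fun φ =>
    Real.sqrt (1 - k2^2 * Real.sin θ ^ 2) / Real.sqrt (1 - k2^2 * Real.sin φ ^ 2)
      + Real.sqrt (1 - k2^2 * Real.sin φ ^ 2) / Real.sqrt (1 - k2^2 * Real.sin θ ^ 2) with hG2
  have cG1 : Continuous G1 :=
    (continuous_const.div (cont_sqrt k1) (fun φ => (sqrt_f_pos hk10 hk11 φ).ne')).add
      ((cont_sqrt k1).div_const _)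
  have cG2 : Continuous G2 :=
    (continuous_const.div (cont_sqrt k2) (fun φ => (sqrt_f_pos hk20 h2 φ).ne')).add
      ((cont_sqrt k2).div_const _)
  have cD : Continuous (fun φ => G2 φ - G1 φ) := cG2.sub cG1
  rw [← sub_pos, ← intervalIntegral.integral_sub (cG2.intervalIntegrable _ _) (cG1.intervalIntegrable _ _)]
  rw [← intervalIntegral.integral_add_adjacent_intervals (a := 0) (b := θ) (c := Real.pi/2)
    (cD.intervalIntegrable _ _) (cD.intervalIntegrable _ _)]
  have pos1 : 0 < ∫ φ in (0:ℝ)..θ, (G2 φ - G1 φ) := by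
    apply intervalIntegral_pos_of_pos_on (cD.intervalIntegrable _ _) _ hθ.1
    intro φ hφ
    rw [sub_pos]
    apply ptwise_lt h0 h12 h2
    have h1 : Real.sin φ < Real.sin θ := by
      apply Real.strictMonoOn_sin ⟨by linarith [hφ.1, Real.pi_pos], by linarith [hφ.2, hθ.2]⟩
        ⟨by linarith [hθ.1, Real.pi_pos], hθ.2.le⟩ hφ.2
    have hφ0 : 0 ≤ Real.sin φ := Real.sin_nonneg_of_nonneg_of_le_pi hφ.1.le (by linarith [hφ.2, hθ.2, Real.pi_pos])
    have : Real.sin φ ^ 2 < Real.sin θ ^ 2 := by nlinarith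
    exact (ne_of_gt this)
  have pos2 : 0 ≤ ∫ φ in θ..(Real.pi/2), (G2 φ - G1 φ) := by
    apply intervalIntegral.integral_nonneg hθ.2.le
    intro φ _
    rw [sub_nonneg]
    exact ptwise_le h0 h12 h2 θ φ
  linarith

theorem EK_mul_strictMonoOn : StrictMonoOn (fun k => E k * K k) (Set.Ioo (0:ℝ) 1) := by
  intro k1 hk1 k2 hk2 h12
  simp only
  have hk10 : (0:ℝ) ≤ k1 := hk1.1.le
  have hk20 : (0:ℝ) ≤ k2 := hk2.1.le
  set P1 : ℝ → ℝ := fun θ =>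
    Real.sqrt (1 - k1^2 * Real.sin θ ^ 2) * K k1 + E k1 / Real.sqrt (1 - k1^2 * Real.sin θ ^ 2) with hP1
  set P2 : ℝ → ℝ := fun θ =>
    Real.sqrt (1 - k2^2 * Real.sin θ ^ 2) * K k2 + E k2 / Real.sqrt (1 - k2^2 * Real.sin θ ^ 2) with hP2
  have cP1 : Continuous P1 :=
    ((cont_sqrt k1).mul continuous_const).add
      (continuous_const.div (cont_sqrt k1) (fun θ => (sqrt_f_pos hk10 hk1.2 θ).ne'))
  have cP2 : Continuous P2 :=
    ((cont_sqrt k2).mul continuous_const).add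
      (continuous_const.div (cont_sqrt k2) (fun θ => (sqrt_f_pos hk20 hk2.2 θ).ne'))
  have key : 0 < ∫ θ in (0:ℝ)..(Real.pi/2), (P2 θ - P1 θ) := by
    apply intervalIntegral_pos_of_pos_on ((cP2.sub cP1).intervalIntegrable _ _)
      _ (by linarith [Real.pi_pos])
    intro θ hθ
    rw [Pi.sub_apply, sub_pos]
    exact P_lt hk1.1 h12 hk2.2 hθ
  rw [intervalIntegral.integral_sub (cP2.intervalIntegrable _ _) (cP1.intervalIntegrable _ _),
    P_integral hk20 hk2.2, P_integral hk10 hk1.2] at key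
  linarith
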